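/- arXiv:2012.01920 — 4 statements merged into one kernel-verified Lean document; each statement's English description precedes it below -/
import Mathlib

section
/- There is an absolute constant c ≥ 1 for which the following holds: for all positive integers n and t with n ≤ t ≤ 2^n, there exists an ordered family S_1, …, S_t of subsets of {1, …, c·n²} such that |S_i| = n for every i ∈ [t] and |S_i ∩ S_j| ≤ log₂ t for every pair of distinct indices i, j ∈ [t]; that is, there exists a (t, c·n², n, log₂ t)-design. -/
open Polynomial Finset

/-- **Nisan–Wigderson designs.** There is an absolute constant `c ≥ 1` such that
for all positive integers `n ≤ t ≤ 2^n` there is an ordered family `S_1, …, S_t` of subsets of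
`{1, …, c·n²}` (modelled as `Fin (c * n²)`), each of size exactly `n`, with pairwise
intersections of size at most `log₂ t`; i.e., a `(t, c·n², n, log₂ t)`-design exists. -/
theorem nw_design_exists :
    ∃ c : ℕ, 1 ≤ c ∧
      ∀ n t : ℕ, 0 < n → n ≤ t → t ≤ 2 ^ n →
        ∃ S : Fin t → Finset (Fin (c * n ^ 2)),
          (∀ i, (S i).card = n) ∧
          ∀ i j : Fin t, i ≠ j → ((S i ∩ S j).card : ℝ) ≤ Real.logb 2 t := by
  refine ⟨4, by norm_num, fun n t hn hnt ht2 => ?_⟩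
  obtain ⟨q, hq, hnq, hq2n⟩ := Nat.exists_prime_lt_and_le_two_mul n hn.ne'
  haveI : Fact q.Prime := ⟨hq⟩
  have ht1 : 1 ≤ t := hn.trans_le hnt
  have h2q : 2 ≤ q := hq.two_le
  -- choose minimal d with t ≤ q ^ d
  have hex : ∃ d, t ≤ q ^ d := ⟨n, ht2.trans (Nat.pow_le_pow_left (by omega) n)⟩
  set d := Nat.find hex with hd
  have hdspec : t ≤ q ^ d := Nat.find_spec hex
  -- polynomials from coefficient vectors
  set P : (Fin d → ZMod q) → (ZMod q)[X] :=
    fun a => ∑ k : Fin d, C (a k) * X ^ (k : ℕ) with hP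
  have hcoeff : ∀ a (k : Fin d), (P a).coeff k = a k := by
    intro a k
    rw [hP]
    simp only [finset_sum_coeff, coeff_C_mul, coeff_X_pow]
    rw [Finset.sum_eq_single k]
    · simp
    · intro j _ hj
      rw [if_neg, mul_zero]
      exact fun h => hj (Fin.ext h.symm)
    · simp
  have hPdeg : ∀ a, (P a).natDegree ≤ d - 1 := by
    intro a
    refine natDegree_sum_le_of_forall_le _ _ fun k _ => ?_
    exact (natDegree_C_mul_le _ _).trans (by simpa using Nat.le_sub_one_of_lt k.2)
  -- embedding of indices into coefficient vectors
  have hcard1 : Fintype.card (Fin t) ≤ Fintype.card (Fin d → ZMod q) := by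
    simpa [ZMod.card] using hdspec
  obtain ⟨e⟩ := Function.Embedding.nonempty_of_card_le hcard1
  -- embedding of the plane into Fin (4 * n^2)
  have hcard2 : Fintype.card (ZMod q × ZMod q) ≤ Fintype.card (Fin (4 * n ^ 2)) := by
    simp [ZMod.card]
    nlinarith
  obtain ⟨emb⟩ := Function.Embedding.nonempty_of_card_le hcard2
  -- the base set X of size n
  obtain ⟨X, -, hX⟩ := Finset.exists_subset_card_eq
    (s := (Finset.univ : Finset (ZMod q))) (n := n) (by simpa [ZMod.card] using hnq.le)
  refine ⟨fun i => X.image (fun x => emb (x, (P (e i)).eval x)), fun i => ?_, ?_⟩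
  · rw [Finset.card_image_of_injective _ (fun x y h => by
      simpa using (Prod.mk.injEq _ _ _ _).mp (emb.injective h) |>.1), hX]
  · intro i j hij
    have hab : e i ≠ e j := fun h => hij (e.injective h)
    have hPab : P (e i) - P (e j) ≠ 0 := by
      intro h
      apply hab
      funext k
      have := hcoeff (e i) k
      rw [show P (e i) = P (e j) from by linear_combination (norm := ring_nf) h,
        hcoeff (e j) k] at this
      exact this.symm
    set Z : Finset (ZMod q) :=
      X.filter (fun x => (P (e i)).eval x = (P (e j)).eval x) with hZ
    have hZcard : Z.card ≤ d - 1 := by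
      have hsub : Z.val ⊆ (P (e i) - P (e j)).roots := by
        intro x hx
        rw [Finset.mem_val, hZ, Finset.mem_filter] at hx
        rw [mem_roots hPab]
        simp [IsRoot, hx.2]
      calc Z.card ≤ (P (e i) - P (e j)).natDegree := card_le_degree_of_subset_roots hsub
        _ ≤ _ := natDegree_sub_le _ _ |>.trans (max_le (hPdeg _) (hPdeg _))
    have hinter : (X.image (fun x => emb (x, (P (e i)).eval x)) ∩
        X.image (fun x => emb (x, (P (e j)).eval x))) ⊆
        Z.image (fun x => emb (x, (P (e i)).eval x)) := by
      intro y hy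
      rw [Finset.mem_inter] at hy
      obtain ⟨x, hxX, hx⟩ := Finset.mem_image.mp hy.1
      obtain ⟨x', hx'X, hx'⟩ := Finset.mem_image.mp hy.2
      have h := emb.injective (hx.trans hx'.symm)
      obtain ⟨h1, h2⟩ := Prod.mk.injEq _ _ _ _ |>.mp h
      subst h1
      exact Finset.mem_image.mpr ⟨x, Finset.mem_filter.mpr ⟨hxX, h2⟩, hx⟩
    have hcl : ((X.image (fun x => emb (x, (P (e i)).eval x)) ∩
        X.image (fun x => emb (x, (P (e j)).eval x))).card : ℝ) ≤ (d - 1 : ℕ) := by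
      exact_mod_cast ((Finset.card_le_card hinter).trans
        ((Finset.card_image_le).trans hZcard))
    refine hcl.trans ?_
    -- show (d - 1 : ℕ) ≤ logb 2 t
    rcases Nat.eq_zero_or_pos d with h0 | hdpos
    · simp [h0]
      exact Real.logb_nonneg (by norm_num) (by exact_mod_cast ht1)
    · have hmin : ¬ t ≤ q ^ (d - 1) := Nat.find_min hex (by omega)
      have h2d : 2 ^ (d - 1) ≤ t := by
        have : (2:ℕ) ^ (d-1) ≤ q ^ (d-1) := Nat.pow_le_pow_left h2q _
        omega
      have : ((d - 1 : ℕ) : ℝ) = Real.logb 2 ((2:ℝ) ^ (d-1)) := by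
        rw [Real.logb_pow]
        simp
      rw [this]
      apply Real.logb_le_logb_of_le (by norm_num) (by positivity)
      exact_mod_cast h2d
end

section
/- Let 1 ≤ n ≤ t ≤ 2^n, let m = c·n² for the design constant c, let f : {0,1}^n → {0,1}, and let S_1,…,S_t be a (t, m, n, log₂ t)-design over [m] defining NW^f : {0,1}^m → {0,1}^t. Let D be an inherently probabilistic test on t-bit strings, and let γ > 0 satisfy |Pr_{s∼uniform({0,1}^m), D}[D(NW^f(s)) = 1] − Pr_{y∼uniform({0,1}^t), D}[D(y) = 1]| ≥ γ. For j ∈ {0,…,t−1}, d ∈ {0,1}, r ∈ {0,1}^{t−j}, and r' ∈ {0,1}^{m−n}, define the inherently probabilistic map A_{j,r,r',d} : {0,1}^n → {0,1} which, on input x, forms the seed s = s(x,r') ∈ {0,1}^m with s|_{S_{j+1}} = x and the remaining coordinates of s equal to r', computes NW^f(s)_1,…,NW^f(s)_j, samples b ∼ D(NW^f(s)_1,…,NW^f(s)_j, r_1,…,r_{t−j}), and outputs r_1 ⊕ d if b = 1 and r_1 ⊕ d ⊕ 1 otherwise. Then there exist j ∈ {0,…,t−1} and d ∈ {0,1} such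 that, with probability at least γ/t over independent uniform choices of r ∈ {0,1}^{t−j} and r' ∈ {0,1}^{m−n}, it holds that Pr_{x∼uniform({0,1}^n), D}[A_{j,r,r',d}(x) = f(x)] ≥ 1/2 + γ/(2t). -/
open Finset
open scoped Classical

/-- The Nisan–Wigderson generator `NW^f : {0,1}^m → {0,1}^t` associated with a function
`f : {0,1}^n → {0,1}` and a design `S_1, …, S_t` of `n`-element subsets of `[m]`:
the `i`-th output bit is `f(z|_{S_i})`. -/
noncomputable def NWgen {n m t : ℕ} (f : (Fin n → Bool) → Bool)
    (S : Fin t → Finset (Fin m)) (hS : ∀ i, (S i).card = n)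
    (z : Fin m → Bool) (i : Fin t) : Bool :=
  f fun a => z ↑((S i).orderIsoOfFin (hS i) a)

/-- The seed `s = s(x, r') ∈ {0,1}^m` with `s|_{S_j} = x` and the remaining `m - n`
coordinates of `s` (those outside `S_j`, in increasing order) equal to `r'`. -/
noncomputable def nwSeed {n m t : ℕ} (S : Fin t → Finset (Fin m)) (hS : ∀ i, (S i).card = n)
    (j : Fin t) (x : Fin n → Bool) (r' : Fin (m - n) → Bool) : Fin m → Bool :=
  fun i =>
    if h : i ∈ S j then x (((S j).orderIsoOfFin (hS j)).symm ⟨i, h⟩)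
    else
      r' (((S j)ᶜ.orderIsoOfFin
            (by rw [Finset.card_compl, hS j, Fintype.card_fin])).symm
          ⟨i, Finset.mem_compl.mpr h⟩)

/-- The probability (over the randomness of the inherently probabilistic test `D`, whose
acceptance probability function is `D1`) that the circuit `A_{j,r,r',d}` outputs `f(x)` on
input `x`: the circuit forms the seed `s` with `s|_{S_{j+1}} = x` and remaining coordinates
`r'`, computes `NW^f(s)_1, …, NW^f(s)_j`, samples `b ∼ D(NW^f(s)_1,…,NW^f(s)_j, r_1,…,r_{t-j})`
and outputs `r_1 ⊕ d` if `b = 1` and `r_1 ⊕ d ⊕ 1` otherwise. -/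
noncomputable def nwAprob {n m t : ℕ} (f : (Fin n → Bool) → Bool)
    (S : Fin t → Finset (Fin m)) (hS : ∀ i, (S i).card = n)
    (D1 : (Fin t → Bool) → ℝ) (j : ℕ) (hj : j < t) (d : Bool)
    (r : Fin (t - j) → Bool) (r' : Fin (m - n) → Bool) (x : Fin n → Bool) : ℝ :=
  let s : Fin m → Bool := nwSeed S hS ⟨j, hj⟩ x r'
  let inp : Fin t → Bool := fun i =>
    if h : (i : ℕ) < j then NWgen f S hS s i
    else r ⟨(i : ℕ) - j, by have hi := i.isLt; omega⟩
  if f x = Bool.xor (r ⟨0, by omega⟩) d then D1 inp else 1 - D1 inp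

/-- hybrid input -/
noncomputable def nwHyb {n m t : ℕ} (f : (Fin n → Bool) → Bool)
    (S : Fin t → Finset (Fin m)) (hS : ∀ i, (S i).card = n)
    (j : ℕ) (s : Fin m → Bool) (r : Fin (t - j) → Bool) : Fin t → Bool :=
  fun i => if h : (i : ℕ) < j then NWgen f S hS s i
    else r ⟨(i : ℕ) - j, by have hi := i.isLt; omega⟩

lemma nwAprob_eq {n m t : ℕ} (f : (Fin n → Bool) → Bool)
    (S : Fin t → Finset (Fin m)) (hS : ∀ i, (S i).card = n)
    (D1 : (Fin t → Bool) → ℝ) (j : ℕ) (hj : j < t) (d : Bool)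
    (r : Fin (t - j) → Bool) (r' : Fin (m - n) → Bool) (x : Fin n → Bool) :
    nwAprob f S hS D1 j hj d r r' x =
      if f x = Bool.xor (r ⟨0, by omega⟩) d
      then D1 (nwHyb f S hS j (nwSeed S hS ⟨j, hj⟩ x r') r)
      else 1 - D1 (nwHyb f S hS j (nwSeed S hS ⟨j, hj⟩ x r') r) := rfl

/-- seed equivalence -/
noncomputable def seedEquiv {n m t : ℕ} (S : Fin t → Finset (Fin m)) (hS : ∀ i, (S i).card = n)
    (j : Fin t) : (Fin n → Bool) × (Fin (m - n) → Bool) ≃ (Fin m → Bool) where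
  toFun p := nwSeed S hS j p.1 p.2
  invFun s := (fun a => s ↑((S j).orderIsoOfFin (hS j) a),
    fun b => s ↑((S j)ᶜ.orderIsoOfFin
      (by rw [Finset.card_compl, hS j, Fintype.card_fin]) b))
  left_inv p := by
    ext a
    · simp only [nwSeed]
      rw [dif_pos ((S j).orderIsoOfFin (hS j) a).2]
      rw [Subtype.coe_eta]
      exact congrArg p.1 (((S j).orderIsoOfFin (hS j)).symm_apply_apply a)
    · simp only [nwSeed]
      rw [dif_neg (by
        have := ((S j)ᶜ.orderIsoOfFin
          (by rw [Finset.card_compl, hS j, Fintype.card_fin]) a).2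
        simp only [Finset.mem_compl] at this
        exact this)]
      rw [Subtype.coe_eta]
      exact congrArg p.2 ((((S j)ᶜ.orderIsoOfFin
        (by rw [Finset.card_compl, hS j, Fintype.card_fin]))).symm_apply_apply a)
  right_inv s := by
    funext i
    simp only [nwSeed]
    by_cases h : i ∈ S j
    · rw [dif_pos h]
      congr 1
      exact congrArg _ (((S j).orderIsoOfFin (hS j)).apply_symm_apply ⟨i, h⟩)
    · rw [dif_neg h]
      congr 1
      exact congrArg _ (((S j)ᶜ.orderIsoOfFin _).apply_symm_apply ⟨i, Finset.mem_compl.mpr h⟩)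

lemma f_nwSeed {n m t : ℕ} (f : (Fin n → Bool) → Bool)
    (S : Fin t → Finset (Fin m)) (hS : ∀ i, (S i).card = n)
    (j : Fin t) (x : Fin n → Bool) (r' : Fin (m - n) → Bool) :
    NWgen f S hS (nwSeed S hS j x r') j = f x := by
  simp only [NWgen, nwSeed]
  congr 1
  funext a
  rw [dif_pos ((S j).orderIsoOfFin (hS j) a).2]
  congr 1
  rw [Subtype.coe_eta]
  exact ((S j).orderIsoOfFin (hS j)).symm_apply_apply a

/-- split off first bit of r -/
noncomputable def splitEquiv (t j : ℕ) (hj : j < t) :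
    Bool × (Fin (t - (j + 1)) → Bool) ≃ (Fin (t - j) → Bool) where
  toFun p i := if h : (i : ℕ) = 0 then p.1 else p.2 ⟨(i : ℕ) - 1, by have := i.isLt; omega⟩
  invFun r := (r ⟨0, by omega⟩, fun k => r ⟨(k : ℕ) + 1, by have := k.isLt; omega⟩)
  left_inv p := by
    ext1
    · simp
    · funext k
      dsimp only
      rw [dif_neg (by simp)]
      exact congrArg p.2 (Fin.ext (by simp))
  right_inv r := by
    funext i
    by_cases h : (i : ℕ) = 0
    · dsimp only
      rw [dif_pos h]
      exact congrArg r (Fin.ext h.symm)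
    · dsimp only
      rw [dif_neg h]
      exact congrArg r (Fin.ext (by simp; omega))

lemma splitEquiv_zero (t j : ℕ) (hj : j < t) (b : Bool) (w : Fin (t - (j + 1)) → Bool)
    (h0 : 0 < t - j) : splitEquiv t j hj (b, w) ⟨0, h0⟩ = b := rfl

lemma nwHyb_split {n m t : ℕ} (f : (Fin n → Bool) → Bool)
    (S : Fin t → Finset (Fin m)) (hS : ∀ i, (S i).card = n)
    (j : ℕ) (hj : j < t) (s : Fin m → Bool) (w : Fin (t - (j + 1)) → Bool) :
    nwHyb f S hS j s (splitEquiv t j hj (NWgen f S hS s ⟨j, hj⟩, w)) =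
      nwHyb f S hS (j + 1) s w := by
  funext i
  dsimp only [nwHyb, splitEquiv, Equiv.coe_fn_mk]
  split_ifs
  any_goals rfl
  any_goals omega
  all_goals first
    | exact congrArg (NWgen f S hS s) (Fin.ext (show j = (i : ℕ) by omega))
    | exact congrArg w (Fin.ext (show (i : ℕ) - j - 1 = (i : ℕ) - (j + 1) by omega))

lemma sum_one_fun_bool (k : ℕ) : ∑ _w : Fin k → Bool, (1 : ℝ) = 2 ^ k := by
  rw [Finset.sum_const, Finset.card_univ]
  simp [Fintype.card_fun]

lemma nwInnerSum {n m t : ℕ} (f : (Fin n → Bool) → Bool)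
    (S : Fin t → Finset (Fin m)) (hS : ∀ i, (S i).card = n)
    (D1 : (Fin t → Bool) → ℝ) (j : ℕ) (hj : j < t) (d : Bool) (s : Fin m → Bool) :
    ∑ r : Fin (t - j) → Bool,
      (if NWgen f S hS s ⟨j, hj⟩ = Bool.xor (r ⟨0, by omega⟩) d
       then D1 (nwHyb f S hS j s r) else 1 - D1 (nwHyb f S hS j s r)) =
    2 ^ (t - (j + 1)) +
      (if d then
        -(2 * (∑ w : Fin (t - (j + 1)) → Bool, D1 (nwHyb f S hS (j + 1) s w)) -
          ∑ r : Fin (t - j) → Bool, D1 (nwHyb f S hS j s r))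
       else
        2 * (∑ w : Fin (t - (j + 1)) → Bool, D1 (nwHyb f S hS (j + 1) s w)) -
          ∑ r : Fin (t - j) → Bool, D1 (nwHyb f S hS j s r)) := by
  set A : Bool → ℝ :=
    fun b => ∑ w : Fin (t - (j + 1)) → Bool, D1 (nwHyb f S hS j s (splitEquiv t j hj (b, w)))
    with hAdef
  have hZ : (∑ r : Fin (t - j) → Bool, D1 (nwHyb f S hS j s r)) = A true + A false := by
    rw [← Equiv.sum_comp (splitEquiv t j hj) (fun r => D1 (nwHyb f S hS j s r)),
      Fintype.sum_prod_type, Fintype.sum_bool]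
  have hAu : A (NWgen f S hS s ⟨j, hj⟩) =
      ∑ w : Fin (t - (j + 1)) → Bool, D1 (nwHyb f S hS (j + 1) s w) := by
    refine Finset.sum_congr rfl fun w _ => ?_
    rw [nwHyb_split]
  have hone : ∀ b : Bool,
      ∑ w : Fin (t - (j + 1)) → Bool,
        (1 - D1 (nwHyb f S hS j s (splitEquiv t j hj (b, w)))) = 2 ^ (t - (j + 1)) - A b := by
    intro b
    rw [Finset.sum_sub_distrib, sum_one_fun_bool]
  rw [← Equiv.sum_comp (splitEquiv t j hj)
      (fun r => if NWgen f S hS s ⟨j, hj⟩ = Bool.xor (r ⟨0, by omega⟩) d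
        then D1 (nwHyb f S hS j s r) else 1 - D1 (nwHyb f S hS j s r)),
    Fintype.sum_prod_type, Fintype.sum_bool]
  simp only [splitEquiv_zero]
  cases d <;> cases hu : NWgen f S hS s ⟨j, hj⟩ <;>
    · rw [hu] at hAu
      simp only [Bool.xor_false, Bool.xor_true, Bool.not_true, Bool.not_false,
        Bool.false_eq_true, Bool.true_eq_false, if_true, if_false, reduceIte, hone]
      linarith [hZ, hAu, hone true, hone false]

noncomputable def nwHS {n m t : ℕ} (f : (Fin n → Bool) → Bool)
    (S : Fin t → Finset (Fin m)) (hS : ∀ i, (S i).card = n)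
    (D1 : (Fin t → Bool) → ℝ) (j : ℕ) : ℝ :=
  ∑ s : Fin m → Bool, ∑ r : Fin (t - j) → Bool, D1 (nwHyb f S hS j s r)

lemma nwT {n m t : ℕ} (f : (Fin n → Bool) → Bool)
    (S : Fin t → Finset (Fin m)) (hS : ∀ i, (S i).card = n)
    (D1 : (Fin t → Bool) → ℝ) (hnm : n ≤ m) (j : ℕ) (hj : j < t) (d : Bool) :
    ∑ p : (Fin (t - j) → Bool) × (Fin (m - n) → Bool), ∑ x : Fin n → Bool,
      nwAprob f S hS D1 j hj d p.1 p.2 x =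
    2 ^ m * 2 ^ (t - (j + 1)) +
      (if d then (-1 : ℝ) else 1) *
        (2 * nwHS f S hS D1 (j + 1) - nwHS f S hS D1 j) := by
  have hsgn : ∀ X : ℝ, (if d then -X else X) = (if d then (-1 : ℝ) else 1) * X := by
    cases d <;> simp
  have step1 : ∀ (x : Fin n → Bool) (r' : Fin (m - n) → Bool),
      ∑ r : Fin (t - j) → Bool, nwAprob f S hS D1 j hj d r r' x =
      2 ^ (t - (j + 1)) + (if d then (-1 : ℝ) else 1) *
        (2 * (∑ w : Fin (t - (j + 1)) → Bool,
            D1 (nwHyb f S hS (j + 1) (nwSeed S hS ⟨j, hj⟩ x r') w)) -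
          ∑ r : Fin (t - j) → Bool, D1 (nwHyb f S hS j (nwSeed S hS ⟨j, hj⟩ x r') r)) := by
    intro x r'
    rw [← hsgn, ← nwInnerSum f S hS D1 j hj d (nwSeed S hS ⟨j, hj⟩ x r')]
    refine Finset.sum_congr rfl fun r _ => ?_
    rw [nwAprob_eq, f_nwSeed]
  have swap1 : ∑ p : (Fin (t - j) → Bool) × (Fin (m - n) → Bool), ∑ x : Fin n → Bool,
      nwAprob f S hS D1 j hj d p.1 p.2 x =
      ∑ q : (Fin n → Bool) × (Fin (m - n) → Bool), ∑ r : Fin (t - j) → Bool,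
        nwAprob f S hS D1 j hj d r q.2 q.1 := by
    rw [Fintype.sum_prod_type, Fintype.sum_prod_type, Finset.sum_comm]
    rw [Finset.sum_congr rfl fun (r' : Fin (m - n) → Bool) _ =>
      (Finset.sum_comm :
        (∑ r : Fin (t - j) → Bool, ∑ x : Fin n → Bool, nwAprob f S hS D1 j hj d r r' x) =
        ∑ x : Fin n → Bool, ∑ r : Fin (t - j) → Bool, nwAprob f S hS D1 j hj d r r' x)]
    rw [Finset.sum_comm]
  rw [swap1]
  have step2 : ∀ q : (Fin n → Bool) × (Fin (m - n) → Bool),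
      ∑ r : Fin (t - j) → Bool, nwAprob f S hS D1 j hj d r q.2 q.1 =
      (2 : ℝ) ^ (t - (j + 1)) + (if d then (-1 : ℝ) else 1) *
        (2 * (∑ w : Fin (t - (j + 1)) → Bool,
            D1 (nwHyb f S hS (j + 1) (seedEquiv S hS ⟨j, hj⟩ q) w)) -
          ∑ r : Fin (t - j) → Bool, D1 (nwHyb f S hS j (seedEquiv S hS ⟨j, hj⟩ q) r)) :=
    fun q => step1 q.1 q.2
  rw [Finset.sum_congr rfl fun q _ => step2 q]
  rw [Finset.sum_add_distrib, Finset.sum_const, Finset.card_univ, nsmul_eq_mul,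
    ← Finset.mul_sum]
  rw [Equiv.sum_comp (seedEquiv S hS ⟨j, hj⟩)
    (fun s => 2 * (∑ w : Fin (t - (j + 1)) → Bool, D1 (nwHyb f S hS (j + 1) s w)) -
      ∑ r : Fin (t - j) → Bool, D1 (nwHyb f S hS j s r))]
  rw [Finset.sum_sub_distrib, ← Finset.mul_sum]
  have hcard : (Fintype.card ((Fin n → Bool) × (Fin (m - n) → Bool)) : ℝ) = 2 ^ m := by
    rw [Fintype.card_prod, Fintype.card_fun, Fintype.card_fun]
    simp only [Fintype.card_bool, Fintype.card_fin]
    push_cast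
    rw [← pow_add, Nat.add_sub_cancel' hnm]
  rw [hcard, nwHS, nwHS]

lemma nwHS_top {n m t : ℕ} (f : (Fin n → Bool) → Bool)
    (S : Fin t → Finset (Fin m)) (hS : ∀ i, (S i).card = n)
    (D1 : (Fin t → Bool) → ℝ) :
    nwHS f S hS D1 t = ∑ s : Fin m → Bool, D1 (NWgen f S hS s) := by
  unfold nwHS
  refine Finset.sum_congr rfl fun s _ => ?_
  have h : ∀ r : Fin (t - t) → Bool, nwHyb f S hS t s r = NWgen f S hS s := by
    intro r; funext i; exact dif_pos i.isLt
  rw [Finset.sum_congr rfl fun r _ => congrArg D1 (h r), Finset.sum_const,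
    Finset.card_univ, Fintype.card_fun]
  simp [Nat.sub_self]

lemma nwHS_zero {n m t : ℕ} (f : (Fin n → Bool) → Bool)
    (S : Fin t → Finset (Fin m)) (hS : ∀ i, (S i).card = n)
    (D1 : (Fin t → Bool) → ℝ) :
    nwHS f S hS D1 0 = 2 ^ m * ∑ y : Fin t → Bool, D1 y := by
  unfold nwHS
  have h : ∀ (s : Fin m → Bool), ∑ r : Fin (t - 0) → Bool, D1 (nwHyb f S hS 0 s r) =
      ∑ y : Fin t → Bool, D1 y := by
    intro s
    rw [← Equiv.sum_comp (Equiv.arrowCongr (finCongr (Nat.sub_zero t)) (Equiv.refl Bool))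
      (fun y : Fin t → Bool => D1 y)]
    exact Finset.sum_congr rfl fun r _ => by congr 1
  rw [Finset.sum_congr rfl fun s _ => h s, Finset.sum_const, Finset.card_univ,
    Fintype.card_fun, nsmul_eq_mul]
  simp

/-- **Nisan–Wigderson reconstruction.** If an inherently probabilistic test `D`
(with acceptance probability function `D1`) `γ`-distinguishes the output of `NW^f` on a
uniform seed from a uniform `t`-bit string, then there are `j ∈ {0,…,t-1}` and `d ∈ {0,1}`
such that with probability at least `γ/t` over independent uniform `r ∈ {0,1}^{t-j}` and
`r' ∈ {0,1}^{m-n}`, the circuit `A_{j,r,r',d}` computes `f` with advantage `γ/(2t)` on a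
uniformly random input `x ∈ {0,1}^n`. -/
theorem nw_reconstruction {n m t c : ℕ}
    (hn : 0 < n) (hnt : n ≤ t) (ht : t ≤ 2 ^ n) (hc : 1 ≤ c) (hm : m = c * n ^ 2)
    (f : (Fin n → Bool) → Bool)
    (S : Fin t → Finset (Fin m)) (hS : ∀ i, (S i).card = n)
    (hdes : ∀ i j : Fin t, i ≠ j → ((S i ∩ S j).card : ℝ) ≤ Real.logb 2 t)
    (D1 : (Fin t → Bool) → ℝ) (hD1 : ∀ z, 0 ≤ D1 z ∧ D1 z ≤ 1)
    (γ : ℝ) (hγ : 0 < γ)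
    (hdist : γ ≤
      |(∑ s : Fin m → Bool, D1 (NWgen f S hS s)) / 2 ^ m -
        (∑ y : Fin t → Bool, D1 y) / 2 ^ t|) :
    ∃ j : ℕ, ∃ hj : j < t, ∃ d : Bool,
      γ / t ≤
        (((Finset.univ : Finset ((Fin (t - j) → Bool) × (Fin (m - n) → Bool))).filter
              (fun p =>
                1 / 2 + γ / (2 * t) ≤
                  (∑ x : Fin n → Bool, nwAprob f S hS D1 j hj d p.1 p.2 x) / 2 ^ n)).card : ℝ) /
          (2 ^ (t - j) * 2 ^ (m - n)) := by
  have ht0 : 0 < t := lt_of_lt_of_le hn hnt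
  have htR : (0 : ℝ) < t := by exact_mod_cast ht0
  have hnm : n ≤ m := by
    have h1 : n ≤ n ^ 2 := by nlinarith
    have h2 : n ^ 2 ≤ c * n ^ 2 := Nat.le_mul_of_pos_left _ hc
    omega
  set H : ℕ → ℝ := fun j => nwHS f S hS D1 j / (2 ^ m * 2 ^ (t - j)) with hH
  have hHt : H t = (∑ s : Fin m → Bool, D1 (NWgen f S hS s)) / 2 ^ m := by
    rw [hH]; dsimp only
    rw [nwHS_top, Nat.sub_self, pow_zero, mul_one]
  have hH0 : H 0 = (∑ y : Fin t → Bool, D1 y) / 2 ^ t := by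
    rw [hH]; dsimp only
    rw [nwHS_zero, Nat.sub_zero,
      mul_div_mul_left _ _ (by positivity : (2 : ℝ) ^ m ≠ 0)]
  have htel : ∃ j, ∃ _hj : j < t, γ / t ≤ |H (j + 1) - H j| := by
    by_contra hcon
    push_neg at hcon
    have h1 : |H t - H 0| ≤ ∑ j ∈ Finset.range t, |H (j + 1) - H j| := by
      rw [← Finset.sum_range_sub H]
      exact Finset.abs_sum_le_sum_abs _ _
    have h2 : ∑ j ∈ Finset.range t, |H (j + 1) - H j| <
        ∑ _j ∈ Finset.range t, γ / t :=
      Finset.sum_lt_sum_of_nonempty (Finset.nonempty_range_iff.mpr ht0.ne')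
        fun j hjr => hcon j (Finset.mem_range.mp hjr)
    have h3 : ∑ _j ∈ Finset.range t, γ / t = γ := by
      rw [Finset.sum_const, Finset.card_range, nsmul_eq_mul]
      field_simp
    have h4 : γ ≤ |H t - H 0| := by rw [hHt, hH0]; exact hdist
    linarith
  obtain ⟨j, hj, hkey⟩ := htel
  set Δ : ℝ := 2 * nwHS f S hS D1 (j + 1) - nwHS f S hS D1 j with hΔ
  have hpow : (2 : ℝ) ^ (t - j) = 2 * 2 ^ (t - (j + 1)) := by
    rw [← pow_succ']
    congr 1
    omega
  have hMpos : (0 : ℝ) < 2 ^ m * 2 ^ (t - j) := by positivity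
  have hdiff : H (j + 1) - H j = Δ / (2 ^ m * 2 ^ (t - j)) := by
    rw [hH]; dsimp only
    rw [hΔ, hpow]
    field_simp
  have hΔabs : γ / t * (2 ^ m * 2 ^ (t - j)) ≤ |Δ| := by
    rw [hdiff, abs_div, abs_of_pos hMpos] at hkey
    calc γ / t * (2 ^ m * 2 ^ (t - j)) ≤
        |Δ| / (2 ^ m * 2 ^ (t - j)) * (2 ^ m * 2 ^ (t - j)) :=
          mul_le_mul_of_nonneg_right hkey hMpos.le
      _ = |Δ| := div_mul_cancel₀ _ hMpos.ne'
  set d : Bool := if 0 ≤ Δ then false else true with hd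
  refine ⟨j, hj, d, ?_⟩
  have hsd : (if d then (-1 : ℝ) else 1) * Δ = |Δ| := by
    by_cases h : 0 ≤ Δ
    · rw [hd, if_pos h]
      simp [abs_of_nonneg h]
    · rw [hd, if_neg h]
      simp [abs_of_neg (lt_of_not_ge h)]
  have hT := nwT f S hS D1 hnm j hj d
  rw [← hΔ, hsd] at hT
  -- per-term bounds
  have hbound : ∀ (r : Fin (t - j) → Bool) (r' : Fin (m - n) → Bool) (x : Fin n → Bool),
      0 ≤ nwAprob f S hS D1 j hj d r r' x ∧ nwAprob f S hS D1 j hj d r r' x ≤ 1 := by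
    intro r r' x
    rw [nwAprob_eq]
    split_ifs
    · exact hD1 _
    · exact ⟨by linarith [(hD1 (nwHyb f S hS j (nwSeed S hS ⟨j, hj⟩ x r') r)).2],
        by linarith [(hD1 (nwHyb f S hS j (nwSeed S hS ⟨j, hj⟩ x r') r)).1]⟩
  have h2n : (0 : ℝ) < 2 ^ n := by positivity
  set v : (Fin (t - j) → Bool) × (Fin (m - n) → Bool) → ℝ :=
    fun p => (∑ x : Fin n → Bool, nwAprob f S hS D1 j hj d p.1 p.2 x) / 2 ^ n with hv
  have hv0 : ∀ p, 0 ≤ v p := by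
    intro p
    apply div_nonneg _ h2n.le
    exact Finset.sum_nonneg fun x _ => (hbound p.1 p.2 x).1
  have hv1 : ∀ p, v p ≤ 1 := by
    intro p
    rw [hv]; dsimp only
    rw [div_le_one h2n]
    calc ∑ x : Fin n → Bool, nwAprob f S hS D1 j hj d p.1 p.2 x ≤
        ∑ _x : Fin n → Bool, (1 : ℝ) :=
          Finset.sum_le_sum fun x _ => (hbound p.1 p.2 x).2
      _ = 2 ^ n := sum_one_fun_bool n
  have hvsum : ∑ p : (Fin (t - j) → Bool) × (Fin (m - n) → Bool), v p =
      (2 ^ m * 2 ^ (t - (j + 1)) + |Δ|) / 2 ^ n := by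
    rw [hv]; dsimp only
    rw [← Finset.sum_div, hT]
  have h2m : (2 : ℝ) ^ m = 2 ^ n * 2 ^ (m - n) := by
    rw [← pow_add]
    congr 1
    omega
  set N : ℝ := 2 ^ (t - j) * 2 ^ (m - n) with hN
  have hNpos : 0 < N := by positivity
  have hsumlb : N * (1 / 2 + γ / t) ≤
      ∑ p : (Fin (t - j) → Bool) × (Fin (m - n) → Bool), v p := by
    rw [hvsum, le_div_iff₀ h2n]
    have hkey2 : N * (1 / 2 + γ / t) * 2 ^ n =
        2 ^ m * 2 ^ (t - (j + 1)) + γ / t * (2 ^ m * 2 ^ (t - j)) := by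
      rw [hN, h2m, hpow]
      ring
    linarith
  -- Markov
  set G := (Finset.univ : Finset ((Fin (t - j) → Bool) × (Fin (m - n) → Bool))).filter
    (fun p => 1 / 2 + γ / (2 * t) ≤ v p) with hG
  have hsplit : ∑ p : (Fin (t - j) → Bool) × (Fin (m - n) → Bool), v p =
      ∑ p ∈ G, v p +
      ∑ p ∈ (Finset.univ : Finset ((Fin (t - j) → Bool) × (Fin (m - n) → Bool))).filter
        (fun p => ¬ (1 / 2 + γ / (2 * t) ≤ v p)), v p :=
    (Finset.sum_filter_add_sum_filter_not _ _ _).symm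
  have hg1 : ∑ p ∈ G, v p ≤ (G.card : ℝ) := by
    calc ∑ p ∈ G, v p ≤ ∑ _p ∈ G, (1 : ℝ) := Finset.sum_le_sum fun p _ => hv1 p
      _ = G.card := by rw [Finset.sum_const, nsmul_eq_mul, mul_one]
  set Gc := (Finset.univ : Finset ((Fin (t - j) → Bool) × (Fin (m - n) → Bool))).filter
    (fun p => ¬ (1 / 2 + γ / (2 * t) ≤ v p)) with hGc
  have hg2 : ∑ p ∈ Gc, v p ≤ (Gc.card : ℝ) * (1 / 2 + γ / (2 * t)) := by
    calc ∑ p ∈ Gc, v p ≤ ∑ _p ∈ Gc, (1 / 2 + γ / (2 * t)) := by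
          refine Finset.sum_le_sum fun p hp => ?_
          have := (Finset.mem_filter.mp hp).2
          linarith [lt_of_not_ge this]
      _ = (Gc.card : ℝ) * (1 / 2 + γ / (2 * t)) := by
          rw [Finset.sum_const, nsmul_eq_mul]
  have hcards : (G.card : ℝ) + (Gc.card : ℝ) = N := by
    have hnat : G.card + Gc.card =
        Fintype.card ((Fin (t - j) → Bool) × (Fin (m - n) → Bool)) := by
      rw [hG, hGc, Finset.card_filter_add_card_filter_not, Finset.card_univ]
    have hcardval : (Fintype.card ((Fin (t - j) → Bool) × (Fin (m - n) → Bool)) : ℝ) = N := by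
      rw [Fintype.card_prod, Fintype.card_fun, Fintype.card_fun]
      simp only [Fintype.card_bool, Fintype.card_fin]
      push_cast
      rw [hN]
    rw [← hcardval]
    exact_mod_cast congrArg (Nat.cast : ℕ → ℝ) hnat
  have hhalf : γ / (2 * t) = γ / t / 2 := by
    rw [div_div]
    ring_nf
  have hgnn : (0 : ℝ) ≤ (G.card : ℝ) := Nat.cast_nonneg _
  have hεnn : (0 : ℝ) ≤ γ / t := by positivity
  have hfinal : γ / t ≤ (G.card : ℝ) / N := by
    rw [le_div_iff₀ hNpos]
    nlinarith [mul_nonneg hgnn hεnn, hsumlb, hsplit, hg1, hg2, hcards]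
  exact hfinal
end

section
/- Let (A,B) ∈ I be a (γ,η)-good edge. Then: (i) for every 0 ≤ i ≤ ℓ, if Γ_i is small (i.e., |Γ_i| < (γη)^5·|N_I(A)|), then Pr_{B'∼W_I(A)}[B' ∈ Γ_i] ≤ (γη)^4; and (ii) for the exceptional bucket, Pr_{B'∼W_I(A)}[B' ∈ Γ_{ℓ+1}] ≤ (γη)^4. -/
open Finset
open scoped Classical
namespace IJKW
noncomputable def prEvent {n : ℕ} (D : ((Fin n → Bool) → Bool) → ℝ)
    (E : ((Fin n → Bool) → Bool) → Prop) : ℝ :=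
  ∑ v : (Fin n → Bool) → Bool, if E v then D v else 0
def Sk (n k : ℕ) : Finset (Finset (Fin n → Bool)) :=
  Finset.univ.filter fun B => B.card = k
noncomputable def Corr {n : ℕ} (g : (Fin n → Bool) → Bool)
    (G : Finset (Fin n → Bool) → ((Fin n → Bool) → Bool) → ℝ)
    (B : Finset (Fin n → Bool)) : ℝ :=
  prEvent (G B) fun v => ∀ x ∈ B, v x = g x
def NI (n k : ℕ) (A : Finset (Fin n → Bool)) : Finset (Finset (Fin n → Bool)) :=
  (Sk n k).filter fun B => A ⊆ B
def NIx (n k : ℕ) (A : Finset (Fin n → Bool)) (x : Fin n → Bool) :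
    Finset (Finset (Fin n → Bool)) :=
  (Sk n k).filter fun B => A ⊆ B ∧ x ∈ B
def Edges (n k : ℕ) : Finset (Finset (Fin n → Bool) × Finset (Fin n → Bool)) :=
  Finset.univ.filter fun p => p.1.card = k / 2 ∧ p.2.card = k ∧ p.1 ⊆ p.2
noncomputable def pcons {n : ℕ} (g : (Fin n → Bool) → Bool)
    (G : Finset (Fin n → Bool) → ((Fin n → Bool) → Bool) → ℝ)
    (A B : Finset (Fin n → Bool)) : ℝ :=
  prEvent (G B) fun v => ∀ a ∈ A, v a = g a
def IsGood {n : ℕ} (g : (Fin n → Bool) → Bool)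
    (G : Finset (Fin n → Bool) → ((Fin n → Bool) → Bool) → ℝ)
    (k : ℕ) (γ η : ℝ) (A B : Finset (Fin n → Bool)) : Prop :=
  η ≤ Corr g G B ∧
    γ ≤ (((NI n k A).filter fun B' => η ≤ Corr g G B').card : ℝ) / ((NI n k A).card : ℝ)

-- extra definitions
/-- `p_tot(A) = ∑_{B' ∈ N_I(A)} p_cons(B')`. -/
noncomputable def ptot {n : ℕ} (g : (Fin n → Bool) → Bool)
    (G : Finset (Fin n → Bool) → ((Fin n → Bool) → Bool) → ℝ)
    (k : ℕ) (A : Finset (Fin n → Bool)) : ℝ :=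
  ∑ B ∈ NI n k A, pcons g G A B

/-- Expectation of `F` under the distribution `W_I(A)`, which assigns `B' ∈ N_I(A)` the
probability `p_cons(B') / p_tot(A)`. -/
noncomputable def Wexp {n : ℕ} (g : (Fin n → Bool) → Bool)
    (G : Finset (Fin n → Bool) → ((Fin n → Bool) → Bool) → ℝ)
    (k : ℕ) (A : Finset (Fin n → Bool)) (F : Finset (Fin n → Bool) → ℝ) : ℝ :=
  (∑ B ∈ NI n k A, pcons g G A B * F B) / ptot g G k A

/-- `p_err(x, B') = Pr_{v ∼ 𝒢(B')}[v|_x ≠ g(x) ∣ v|_A = g^{k/2}(A)]`. -/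
noncomputable def perr {n : ℕ} (g : (Fin n → Bool) → Bool)
    (G : Finset (Fin n → Bool) → ((Fin n → Bool) → Bool) → ℝ)
    (A : Finset (Fin n → Bool)) (x : Fin n → Bool) (B : Finset (Fin n → Bool)) : ℝ :=
  prEvent (G B) (fun v => v x ≠ g x ∧ ∀ a ∈ A, v a = g a) / pcons g G A B

/-- `ErrCons(A, B') = E_{x ∼ uniform on B'∖A}[p_err(x, B')]`. -/
noncomputable def ErrCons {n : ℕ} (g : (Fin n → Bool) → Bool)
    (G : Finset (Fin n → Bool) → ((Fin n → Bool) → Bool) → ℝ)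
    (A B : Finset (Fin n → Bool)) : ℝ :=
  (∑ x ∈ B \ A, perr g G A x B) / ((B \ A).card : ℝ)

/-- An edge `(A,B)` is `(γ,η,α)`-excellent if it is `(γ,η)`-good and
`E_{B' ∼ W_I(A)}[ErrCons(A,B')] ≤ α`. -/
def IsExcellent {n : ℕ} (g : (Fin n → Bool) → Bool)
    (G : Finset (Fin n → Bool) → ((Fin n → Bool) → Bool) → ℝ)
    (k : ℕ) (γ η α : ℝ) (A B : Finset (Fin n → Bool)) : Prop :=
  IsGood g G k γ η A B ∧ Wexp g G k A (fun B' => ErrCons g G A B') ≤ α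

/-- `p_tot(x) = ∑_{B ∈ N_I(A,x)} p_cons(B)`. -/
noncomputable def ptotx {n : ℕ} (g : (Fin n → Bool) → Bool)
    (G : Finset (Fin n → Bool) → ((Fin n → Bool) → Bool) → ℝ)
    (k : ℕ) (A : Finset (Fin n → Bool)) (x : Fin n → Bool) : ℝ :=
  ∑ B ∈ NIx n k A x, pcons g G A B

/-- `h(x) = ∑_{B ∈ N_I(A,x)} p_err(x,B) · p_used(x,B)` with `p_used(x,B) = p_cons(B)/p_tot(x)`. -/
noncomputable def hFn {n : ℕ} (g : (Fin n → Bool) → Bool)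
    (G : Finset (Fin n → Bool) → ((Fin n → Bool) → Bool) → ℝ)
    (k : ℕ) (A : Finset (Fin n → Bool)) (x : Fin n → Bool) : ℝ :=
  ∑ B ∈ NIx n k A x, perr g G A x B * (pcons g G A B / ptotx g G k A x)

/-- `μ(B') = E_{x ∼ uniform on B'∖A}[h(x)]`. -/
noncomputable def muFn {n : ℕ} (g : (Fin n → Bool) → Bool)
    (G : Finset (Fin n → Bool) → ((Fin n → Bool) → Bool) → ℝ)
    (k : ℕ) (A B' : Finset (Fin n → Bool)) : ℝ :=
  (∑ x ∈ B' \ A, hFn g G k A x) / ((B' \ A).card : ℝ)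

/-- The bucket `Γ_i = {B' ∈ N_I(A) : 2^{-i-1} < p_cons(B') ≤ 2^{-i}}`. -/
noncomputable def Gam {n : ℕ} (g : (Fin n → Bool) → Bool)
    (G : Finset (Fin n → Bool) → ((Fin n → Bool) → Bool) → ℝ)
    (k : ℕ) (A : Finset (Fin n → Bool)) (i : ℕ) : Finset (Finset (Fin n → Bool)) :=
  (NI n k A).filter fun B' =>
    ((2 : ℝ) ^ (i + 1))⁻¹ < pcons g G A B' ∧ pcons g G A B' ≤ ((2 : ℝ) ^ i)⁻¹

/-- The exceptional bucket `Γ_{ℓ+1} = {B' ∈ N_I(A) : p_cons(B') ≤ 2^{-ℓ-1}}`, where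
`ℓ = ⌈5·log₂(1/(γη))⌉`. -/
noncomputable def GamTop {n : ℕ} (g : (Fin n → Bool) → Bool)
    (G : Finset (Fin n → Bool) → ((Fin n → Bool) → Bool) → ℝ)
    (k : ℕ) (A : Finset (Fin n → Bool)) (γ η : ℝ) : Finset (Finset (Fin n → Bool)) :=
  (NI n k A).filter fun B' =>
    pcons g G A B' ≤ ((2 : ℝ) ^ (⌈5 * Real.logb 2 (1 / (γ * η))⌉₊ + 1))⁻¹

/-- The probability that one iteration of the decoder `C_{A,w}` on input `x ∉ A` halts,
i.e. that for `B'` uniform on `N_I(A,x)` and `v ∼ 𝒢(B')` we have `v|_A = w`. -/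
noncomputable def phalt {n : ℕ}
    (G : Finset (Fin n → Bool) → ((Fin n → Bool) → Bool) → ℝ)
    (k : ℕ) (A : Finset (Fin n → Bool)) (w : (Fin n → Bool) → Bool) (x : Fin n → Bool) : ℝ :=
  (∑ B ∈ NIx n k A x, prEvent (G B) fun v => ∀ a ∈ A, v a = w a) / ((NIx n k A x).card : ℝ)

/-- The probability that one iteration of the decoder `C_{A,w}` on input `x ∉ A` halts with
output bit `b`. -/
noncomputable def phaltBit {n : ℕ}
    (G : Finset (Fin n → Bool) → ((Fin n → Bool) → Bool) → ℝ)
    (k : ℕ) (A : Finset (Fin n → Bool)) (w : (Fin n → Bool) → Bool) (x : Fin n → Bool)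
    (b : Bool) : ℝ :=
  (∑ B ∈ NIx n k A x, prEvent (G B) fun v => (∀ a ∈ A, v a = w a) ∧ v x = b) /
    ((NIx n k A x).card : ℝ)

/-- The probability that the randomized decoder `C_{A,w}` with `T` iterations outputs the
bit `b` on input `x`.  For `x ∈ A` it deterministically outputs `w|_x`; otherwise, the `i`-th
iteration is reached with probability `(1 - phalt)^{i-1}` and halts with output `b` with
probability `phaltBit b`. -/
noncomputable def probOutEq {n : ℕ}
    (G : Finset (Fin n → Bool) → ((Fin n → Bool) → Bool) → ℝ)
    (k : ℕ) (A : Finset (Fin n → Bool)) (T : ℕ) (w : (Fin n → Bool) → Bool)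
    (x : Fin n → Bool) (b : Bool) : ℝ :=
  if x ∈ A then (if w x = b then 1 else 0)
  else phaltBit G k A w x b * ∑ i ∈ Finset.range T, (1 - phalt G k A w x) ^ i

/-- The probability that the randomized decoder `C_{A,w}` with `T` iterations outputs `⊥`
on input `x`. -/
noncomputable def probOutBot {n : ℕ}
    (G : Finset (Fin n → Bool) → ((Fin n → Bool) → Bool) → ℝ)
    (k : ℕ) (A : Finset (Fin n → Bool)) (T : ℕ) (w : (Fin n → Bool) → Bool)
    (x : Fin n → Bool) : ℝ :=
  if x ∈ A then 0 else (1 - phalt G k A w x) ^ T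

/-- `B''` is `A`-heavy: `Pr_{v ∼ 𝒢(B''), x ∼ uniform on B''∖A}[v|_x ≠ g(x) ∣ v|_A = g^{k/2}(A)]
  > α/2`. -/
noncomputable def IsHeavy {n : ℕ} (g : (Fin n → Bool) → Bool)
    (G : Finset (Fin n → Bool) → ((Fin n → Bool) → Bool) → ℝ)
    (A : Finset (Fin n → Bool)) (α : ℝ) (B'' : Finset (Fin n → Bool)) : Prop :=
  α / 2 <
    ((∑ x ∈ B'' \ A, prEvent (G B'') fun v => v x ≠ g x ∧ ∀ a ∈ A, v a = g a) /
        ((B'' \ A).card : ℝ)) / pcons g G A B''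


lemma prEvent_nonneg' {n : ℕ} {D : ((Fin n → Bool) → Bool) → ℝ}
    (hD : ∀ v, 0 ≤ D v) (E : ((Fin n → Bool) → Bool) → Prop) : 0 ≤ prEvent D E :=
  Finset.sum_nonneg fun v _ => by by_cases h : E v <;> simp [h, hD v]

lemma prEvent_le_one' {n : ℕ} {D : ((Fin n → Bool) → Bool) → ℝ}
    (hD : ∀ v, 0 ≤ D v) (hsum : ∑ v, D v = 1)
    (E : ((Fin n → Bool) → Bool) → Prop) : prEvent D E ≤ 1 := by
  rw [← hsum]
  exact Finset.sum_le_sum fun v _ => by by_cases h : E v <;> simp [h, hD v]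

lemma prEvent_mono' {n : ℕ} {D : ((Fin n → Bool) → Bool) → ℝ}
    (hD : ∀ v, 0 ≤ D v) {E₁ E₂ : ((Fin n → Bool) → Bool) → Prop}
    (h : ∀ v, E₁ v → E₂ v) : prEvent D E₁ ≤ prEvent D E₂ := by
  refine Finset.sum_le_sum fun v _ => ?_
  by_cases h1 : E₁ v
  · simp [h1, h v h1]
  · by_cases h2 : E₂ v <;> simp [h1, h2, hD v]

/-- Let `(A,B) ∈ I` be a `(γ,η)`-good edge.  Then (i) for every
`0 ≤ i ≤ ℓ` (with `ℓ = ⌈5·log₂(1/(γη))⌉`), if the bucket `Γ_i` is small (i.e.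
`|Γ_i| < (γη)^5·|N_I(A)|`), then `Pr_{B' ∼ W_I(A)}[B' ∈ Γ_i] ≤ (γη)^4`; and (ii) for the
exceptional bucket, `Pr_{B' ∼ W_I(A)}[B' ∈ Γ_{ℓ+1}] ≤ (γη)^4`. -/
theorem small_buckets_have_small_weight
    (n k : ℕ) (hn : 0 < n) (hk : 0 < k) (hkeven : Even k) (hk2 : k ≤ 2 ^ n)
    (g : (Fin n → Bool) → Bool)
    (G : Finset (Fin n → Bool) → ((Fin n → Bool) → Bool) → ℝ)
    (hGnn : ∀ B ∈ Sk n k, ∀ v, 0 ≤ G B v)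
    (hGsum : ∀ B ∈ Sk n k, ∑ v, G B v = 1)
    (hGpos : ∀ B ∈ Sk n k, 0 < Corr g G B)
    (γ η : ℝ) (hγ : 0 < γ) (hη : 0 < η)
    (A B : Finset (Fin n → Bool)) (hAB : (A, B) ∈ Edges n k)
    (hgood : IsGood g G k γ η A B) :
    (∀ i : ℕ, i ≤ ⌈5 * Real.logb 2 (1 / (γ * η))⌉₊ →
        ((Gam g G k A i).card : ℝ) < (γ * η) ^ 5 * ((NI n k A).card : ℝ) →
        (∑ B' ∈ Gam g G k A i, pcons g G A B') / ptot g G k A ≤ (γ * η) ^ 4) ∧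
      (∑ B' ∈ GamTop g G k A γ η, pcons g G A B') / ptot g G k A ≤ (γ * η) ^ 4 := by
  classical
  simp only [Edges, Finset.mem_filter, Finset.mem_univ, true_and] at hAB
  obtain ⟨hAcard, hBcard, hABsub⟩ := hAB
  have hBSk : B ∈ Sk n k := by simp [Sk, hBcard]
  -- basic facts about pcons on NI
  have hNISk : ∀ B' ∈ NI n k A, B' ∈ Sk n k := fun B' hB' => (Finset.mem_filter.1 hB').1
  have hpcons_nn : ∀ B' ∈ NI n k A, 0 ≤ pcons g G A B' := fun B' hB' =>
    prEvent_nonneg' (hGnn B' (hNISk B' hB')) _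
  have hpcons_le1 : ∀ B' ∈ NI n k A, pcons g G A B' ≤ 1 := fun B' hB' =>
    prEvent_le_one' (hGnn B' (hNISk B' hB')) (hGsum B' (hNISk B' hB')) _
  have hCorr_le : ∀ B' ∈ NI n k A, Corr g G B' ≤ pcons g G A B' := by
    intro B' hB'
    have hsub : A ⊆ B' := (Finset.mem_filter.1 hB').2
    exact prEvent_mono' (hGnn B' (hNISk B' hB')) fun v hv a ha => hv a (hsub ha)
  set N := NI n k A with hN
  set S := N.filter (fun B' => η ≤ Corr g G B') with hS
  have hγη1 : γ * η ≤ 1 := by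
    have hBN : B ∈ N := by simp [hN, NI, hBSk, hABsub]
    have hη1 : η ≤ 1 := le_trans hgood.1
      (prEvent_le_one' (hGnn B hBSk) (hGsum B hBSk) _)
    have hγ1 : γ ≤ 1 := by
      rcases le_or_gt ((N.card : ℝ)) 0 with h | h
      · exfalso
        have h0 : (((NI n k A).card : ℕ) : ℝ) = 0 := le_antisymm h (Nat.cast_nonneg _)
        have h2 := hgood.2
        rw [h0, div_zero] at h2
        linarith
      · have h1 : ((S.card : ℝ)) / (N.card : ℝ) ≤ 1 := by
          rw [div_le_one h]
          exact_mod_cast Finset.card_filter_le _ _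
        exact le_trans hgood.2 h1
    calc γ * η ≤ 1 * 1 := mul_le_mul hγ1 hη1 hη.le zero_le_one
    _ = 1 := by ring
  have hγηpos : 0 < γ * η := mul_pos hγ hη
  -- N.card > 0
  have hNpos : 0 < (N.card : ℝ) := by
    rcases Nat.eq_zero_or_pos N.card with h | h
    · exfalso
      have h0 : (((NI n k A).card : ℕ) : ℝ) = 0 := by exact_mod_cast h
      have h2 := hgood.2
      rw [h0, div_zero] at h2
      linarith
    · exact_mod_cast h
  have hScard : γ * (N.card : ℝ) ≤ (S.card : ℝ) := by
    have := hgood.2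
    rw [le_div_iff₀ hNpos] at this
    exact this
  -- lower bound on ptot
  have hptot : γ * η * (N.card : ℝ) ≤ ptot g G k A := by
    have h1 : η * (S.card : ℝ) ≤ ∑ B' ∈ S, pcons g G A B' := by
      rw [mul_comm]
      calc (S.card : ℝ) * η = ∑ _B' ∈ S, η := by rw [Finset.sum_const, nsmul_eq_mul]
      _ ≤ ∑ B' ∈ S, pcons g G A B' := Finset.sum_le_sum fun B' hB' => by
          have hB'N : B' ∈ N := Finset.mem_filter.1 hB' |>.1
          exact le_trans (Finset.mem_filter.1 hB').2 (hCorr_le B' hB'N)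
    have h2 : ∑ B' ∈ S, pcons g G A B' ≤ ∑ B' ∈ N, pcons g G A B' :=
      Finset.sum_le_sum_of_subset_of_nonneg (Finset.filter_subset _ _)
        (fun B' hB' _ => hpcons_nn B' hB')
    have h3 : γ * η * (N.card : ℝ) ≤ η * (S.card : ℝ) := by
      have := mul_le_mul_of_nonneg_left hScard hη.le
      nlinarith
    calc γ * η * (N.card : ℝ) ≤ η * (S.card : ℝ) := h3
    _ ≤ ∑ B' ∈ S, pcons g G A B' := h1
    _ ≤ ∑ B' ∈ N, pcons g G A B' := h2
    _ = ptot g G k A := rfl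
  have hptot_pos : 0 < ptot g G k A :=
    lt_of_lt_of_le (by positivity) hptot
  constructor
  · -- part (i)
    intro i _ hsmall
    rw [div_le_iff₀ hptot_pos]
    have h1 : ∑ B' ∈ Gam g G k A i, pcons g G A B' ≤ ((Gam g G k A i).card : ℝ) := by
      calc ∑ B' ∈ Gam g G k A i, pcons g G A B' ≤ ∑ _B' ∈ Gam g G k A i, (1 : ℝ) :=
            Finset.sum_le_sum fun B' hB' =>
              hpcons_le1 B' (Finset.mem_filter.1 hB' |>.1)
      _ = ((Gam g G k A i).card : ℝ) := by simp
    calc ∑ B' ∈ Gam g G k A i, pcons g G A B' ≤ ((Gam g G k A i).card : ℝ) := h1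
    _ ≤ (γ * η) ^ 5 * ((NI n k A).card : ℝ) := hsmall.le
    _ = (γ * η) ^ 4 * (γ * η * (N.card : ℝ)) := by ring
    _ ≤ (γ * η) ^ 4 * ptot g G k A := by
        apply mul_le_mul_of_nonneg_left hptot (by positivity)
  · -- part (ii)
    set l := ⌈5 * Real.logb 2 (1 / (γ * η))⌉₊ with hl
    have hkey : ((2 : ℝ) ^ (l + 1))⁻¹ ≤ (γ * η) ^ 5 := by
      have h1 : (1 / (γ * η)) ^ (5 : ℕ) ≤ (2 : ℝ) ^ l := by
        have hle : 5 * Real.logb 2 (1 / (γ * η)) ≤ (l : ℝ) := Nat.le_ceil _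
        have h2 : (2 : ℝ) ^ (5 * Real.logb 2 (1 / (γ * η))) ≤ (2 : ℝ) ^ ((l : ℝ)) :=
          Real.rpow_le_rpow_of_exponent_le one_le_two hle
        have h3 : (2 : ℝ) ^ (5 * Real.logb 2 (1 / (γ * η))) = (1 / (γ * η)) ^ (5 : ℕ) := by
          rw [mul_comm, Real.rpow_mul (by norm_num), Real.rpow_logb (by norm_num)
            (by norm_num) (by positivity)]
          rw [← Real.rpow_natCast]
          norm_num
        rw [h3] at h2
        rwa [Real.rpow_natCast] at h2
      have h4 : ((γ * η) ^ 5)⁻¹ ≤ (2 : ℝ) ^ (l + 1) := by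
        have : (1 / (γ * η)) ^ (5 : ℕ) = ((γ * η) ^ 5)⁻¹ := by
          rw [one_div, inv_pow]
        rw [← this]
        calc (1 / (γ * η)) ^ (5 : ℕ) ≤ (2 : ℝ) ^ l := h1
        _ ≤ (2 : ℝ) ^ (l + 1) := by
            apply pow_le_pow_right₀ one_le_two (Nat.le_succ l)
      rw [inv_le_comm₀ (by positivity) (by positivity)] at h4
      exact h4
    rw [div_le_iff₀ hptot_pos]
    have h1 : ∑ B' ∈ GamTop g G k A γ η, pcons g G A B' ≤
        ((GamTop g G k A γ η).card : ℝ) * ((2 : ℝ) ^ (l + 1))⁻¹ := by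
      calc ∑ B' ∈ GamTop g G k A γ η, pcons g G A B'
          ≤ ∑ _B' ∈ GamTop g G k A γ η, ((2 : ℝ) ^ (l + 1))⁻¹ :=
            Finset.sum_le_sum fun B' hB' => (Finset.mem_filter.1 hB').2
      _ = ((GamTop g G k A γ η).card : ℝ) * ((2 : ℝ) ^ (l + 1))⁻¹ := by
          rw [Finset.sum_const, nsmul_eq_mul]
    have hcard : ((GamTop g G k A γ η).card : ℝ) ≤ (N.card : ℝ) := by
      exact_mod_cast Finset.card_filter_le _ _
    calc ∑ B' ∈ GamTop g G k A γ η, pcons g G A B'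
        ≤ ((GamTop g G k A γ η).card : ℝ) * ((2 : ℝ) ^ (l + 1))⁻¹ := h1
    _ ≤ (N.card : ℝ) * (γ * η) ^ 5 := by
        apply mul_le_mul hcard hkey (by positivity) (Nat.cast_nonneg _)
    _ = (γ * η) ^ 4 * (γ * η * (N.card : ℝ)) := by ring
    _ ≤ (γ * η) ^ 4 * ptot g G k A :=
        mul_le_mul_of_nonneg_left hptot (by positivity)

end IJKW
end

section
/- Let α, ε > 0 and set ε* = (α/8)·(ε²/9). For every (ε/3, ε/3)-good edge (A,B) ∈ I: if Pr_{B''∼W_I(A)}[B'' is A-heavy] > α/2, then Pr_{B'∼uniform on N_I(A)}[B' is A-heavy and p_cons(B') ≥ ε*] > (α/108)·ε³. -/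
open Finset
open scoped Classical
namespace IJKW
/-- Let `α, ε > 0` and `ε* = (α/8)·(ε²/9)`.  For every `(ε/3, ε/3)`-good
edge `(A,B) ∈ I`: if `Pr_{B'' ∼ W_I(A)}[B'' is A-heavy] > α/2`, then
`Pr_{B' ∼ uniform on N_I(A)}[B' is A-heavy and p_cons(B') ≥ ε*] > (α/108)·ε³`. -/
theorem heavy_sets_with_large_pcons
    (n k : ℕ) (hn : 0 < n) (hk : 0 < k) (hkeven : Even k) (hk2 : k ≤ 2 ^ n)
    (g : (Fin n → Bool) → Bool)
    (G : Finset (Fin n → Bool) → ((Fin n → Bool) → Bool) → ℝ)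
    (hGnn : ∀ B ∈ Sk n k, ∀ v, 0 ≤ G B v)
    (hGsum : ∀ B ∈ Sk n k, ∑ v, G B v = 1)
    (hGpos : ∀ B ∈ Sk n k, 0 < Corr g G B)
    (α ε : ℝ) (hα : 0 < α) (hε : 0 < ε)
    (A B : Finset (Fin n → Bool)) (hAB : (A, B) ∈ Edges n k)
    (hgood : IsGood g G k (ε / 3) (ε / 3) A B)
    (hheavy : α / 2 <
      (∑ B'' ∈ (NI n k A).filter fun B'' => IsHeavy g G A α B'', pcons g G A B'') /
        ptot g G k A) :
    (α / 108) * ε ^ 3 <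
      (((NI n k A).filter fun B' =>
            IsHeavy g G A α B' ∧ (α / 8) * (ε ^ 2 / 9) ≤ pcons g G A B').card : ℝ) /
        ((NI n k A).card : ℝ) := by
  classical
  obtain ⟨-, hBk, hsub⟩ : A.card = k / 2 ∧ B.card = k ∧ A ⊆ B := by
    simpa [Edges] using hAB
  have hBN : B ∈ NI n k A := by simp [NI, Sk, hBk, hsub]
  have hNpos : 0 < ((NI n k A).card : ℝ) := by
    exact_mod_cast Finset.card_pos.mpr ⟨B, hBN⟩
  have hSkm : ∀ B' ∈ NI n k A, B' ∈ Sk n k := fun B' h => (Finset.mem_filter.mp h).1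
  have hsubN : ∀ B' ∈ NI n k A, A ⊆ B' := fun B' h => (Finset.mem_filter.mp h).2
  -- basic bounds on pcons
  have hpc0 : ∀ B' ∈ NI n k A, 0 ≤ pcons g G A B' := by
    intro B' hB'
    refine Finset.sum_nonneg fun v _ => ?_
    split_ifs
    · exact hGnn B' (hSkm B' hB') v
    · exact le_rfl
  have hpc1 : ∀ B' ∈ NI n k A, pcons g G A B' ≤ 1 := by
    intro B' hB'
    calc pcons g G A B' ≤ ∑ v, G B' v := by
          refine Finset.sum_le_sum fun v _ => ?_
          split_ifs
          · exact le_rfl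
          · exact hGnn B' (hSkm B' hB') v
      _ = 1 := hGsum B' (hSkm B' hB')
  have hcorr_le : ∀ B' ∈ NI n k A, Corr g G B' ≤ pcons g G A B' := by
    intro B' hB'
    refine Finset.sum_le_sum fun v _ => ?_
    split_ifs with h1 h2 h3
    · exact le_rfl
    · exact absurd (fun a ha => h1 a (hsubN B' hB' ha)) h2
    · exact hGnn B' (hSkm B' hB') v
    · exact le_rfl
  -- the good sets
  set Good := (NI n k A).filter (fun B' => ε / 3 ≤ Corr g G B') with hGoodDef
  have hGoodCard : (ε / 3) * ((NI n k A).card : ℝ) ≤ (Good.card : ℝ) :=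
    (le_div_iff₀ hNpos).mp hgood.2
  have hGsub : Good ⊆ NI n k A := Finset.filter_subset _ _
  have hε3 : ε ≤ 3 := by
    have hle : (Good.card : ℝ) ≤ ((NI n k A).card : ℝ) := by
      exact_mod_cast Finset.card_le_card hGsub
    nlinarith
  -- lower bound on ptot
  have hptot : (ε / 3) * (ε / 3) * ((NI n k A).card : ℝ) ≤ ptot g G k A := by
    have h1 : ∑ B' ∈ Good, pcons g G A B' ≤ ptot g G k A := by
      exact Finset.sum_le_sum_of_subset_of_nonneg hGsub fun i hi _ => hpc0 i hi
    have h2 : (Good.card : ℝ) * (ε / 3) ≤ ∑ B' ∈ Good, pcons g G A B' := by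
      have := Finset.card_nsmul_le_sum Good (fun B' => pcons g G A B') (ε / 3)
        (fun B' hB' => le_trans (Finset.mem_filter.mp hB').2 (hcorr_le B' (hGsub hB')))
      simpa [nsmul_eq_mul] using this
    nlinarith
  have hptotpos : 0 < ptot g G k A := by
    have : 0 < (ε / 3) * (ε / 3) * ((NI n k A).card : ℝ) := by positivity
    linarith
  -- from hheavy
  set S := (NI n k A).filter (fun B'' => IsHeavy g G A α B'') with hSdef
  have hSsum : α / 2 * ptot g G k A < ∑ B'' ∈ S, pcons g G A B'' := by
    have := (lt_div_iff₀ hptotpos).mp hheavy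
    linarith
  -- split the heavy sum
  set estar := (α / 8) * (ε ^ 2 / 9) with hestar
  set H := (NI n k A).filter
      (fun B' => IsHeavy g G A α B' ∧ (α / 8) * (ε ^ 2 / 9) ≤ pcons g G A B') with hHdef
  have hfilt : S.filter (fun B' => estar ≤ pcons g G A B') = H := by
    rw [hSdef, Finset.filter_filter]
  have hsplit : ∑ B'' ∈ S, pcons g G A B''
      ≤ (H.card : ℝ) + estar * ((NI n k A).card : ℝ) := by
    have hsp := Finset.sum_filter_add_sum_filter_not S
      (fun B' => estar ≤ pcons g G A B') (fun B' => pcons g G A B')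
    have hS1 : ∑ B' ∈ S.filter (fun B' => estar ≤ pcons g G A B'), pcons g G A B'
        ≤ (H.card : ℝ) := by
      rw [hfilt]
      calc ∑ B' ∈ H, pcons g G A B' ≤ ∑ B' ∈ H, (1 : ℝ) := by
            refine Finset.sum_le_sum fun B' hB' => ?_
            exact hpc1 B' (Finset.mem_filter.mp hB').1
        _ = (H.card : ℝ) := by simp
    have hS2 : ∑ B' ∈ S.filter (fun B' => ¬ estar ≤ pcons g G A B'), pcons g G A B'
        ≤ estar * ((NI n k A).card : ℝ) := by
      calc ∑ B' ∈ S.filter (fun B' => ¬ estar ≤ pcons g G A B'), pcons g G A B'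
          ≤ ∑ _B' ∈ S.filter (fun B' => ¬ estar ≤ pcons g G A B'), estar := by
            refine Finset.sum_le_sum fun B' hB' => ?_
            exact le_of_lt (lt_of_not_ge (Finset.mem_filter.mp hB').2)
        _ = ((S.filter (fun B' => ¬ estar ≤ pcons g G A B')).card : ℝ) * estar := by
            simp [mul_comm]
        _ ≤ ((NI n k A).card : ℝ) * estar := by
            have : (S.filter (fun B' => ¬ estar ≤ pcons g G A B')) ⊆ NI n k A :=
              (Finset.filter_subset _ _).trans (Finset.filter_subset _ _)
            have hc : ((S.filter (fun B' => ¬ estar ≤ pcons g G A B')).card : ℝ)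
                ≤ ((NI n k A).card : ℝ) := by exact_mod_cast Finset.card_le_card this
            have hest : 0 ≤ estar := by positivity
            nlinarith
        _ = estar * ((NI n k A).card : ℝ) := by ring
    linarith
  -- final arithmetic
  rw [lt_div_iff₀ hNpos]
  have hεcube : ε ^ 3 ≤ 3 * ε ^ 2 := by nlinarith [sq_nonneg ε]
  nlinarith [mul_pos (mul_pos hα (pow_pos hε 2)) hNpos,
    mul_le_mul_of_nonneg_left hεcube (le_of_lt (mul_pos hα hNpos)),
    mul_le_mul_of_nonneg_left hptot (le_of_lt (half_pos hα))]

end IJKW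
end
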